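/- The number of semistandard Young tableaux of shape (k-1, k-2, ..., 1, 0) with entries in {1,...,k} equals 2^{k(k-1)/2}. -/

import Mathlib

open Polynomial Finset

noncomputable def faul (p : ℕ) : ℚ[X] :=
  ∑ i ∈ range (p+1), C (_root_.bernoulli i * ((p+1).choose i) / (p+1)) * X^(p+1-i)

lemma faul_eval (p n : ℕ) : (faul p).eval (n:ℚ) = ∑ s ∈ range n, (s:ℚ)^p := by
  rw [sum_range_pow, faul, eval_finset_sum]
  refine Finset.sum_congr rfl fun i _ => ?_
  simp [div_mul_eq_mul_div]

lemma faul_natDegree_le (p : ℕ) : (faul p).natDegree ≤ p + 1 := by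
  refine Polynomial.natDegree_sum_le_of_forall_le _ _ fun i hi => ?_
  refine (Polynomial.natDegree_C_mul_le _ _).trans ?_
  simp [Nat.sub_le]

lemma faul_coeff_top (p : ℕ) : (faul p).coeff (p+1) = 1/(p+1) := by
  rw [faul, Polynomial.finset_sum_coeff]
  rw [Finset.sum_eq_single 0]
  · simp
  · intro i hi hne
    rw [Polynomial.coeff_C_mul, Polynomial.coeff_X_pow, if_neg, mul_zero]
    simp only [mem_range] at hi
    omega
  · simp

lemma faul_natDegree (p : ℕ) : (faul p).natDegree = p + 1 := by
  refine Polynomial.natDegree_eq_of_le_of_coeff_ne_zero (faul_natDegree_le p) ?_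
  rw [faul_coeff_top]
  positivity

/-- the monic column polynomials -/
noncomputable def gpol (j : ℕ) : ℚ[X] := if j = 0 then 1 else C (j:ℚ) * faul (j-1)

lemma gpol_natDegree (j : ℕ) : (gpol j).natDegree = j := by
  rcases Nat.eq_zero_or_pos j with h | h
  · simp [gpol, h]
  · rw [gpol, if_neg h.ne', Polynomial.natDegree_C_mul (by positivity), faul_natDegree]
    omega

lemma gpol_monic (j : ℕ) : (gpol j).Monic := by
  rcases Nat.eq_zero_or_pos j with h | h
  · simp [gpol, h, monic_one]
  · have hne : ((j:ℚ)) ≠ 0 := by positivity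
    rw [Polynomial.Monic, Polynomial.leadingCoeff, gpol_natDegree, gpol, if_neg h.ne',
      Polynomial.coeff_C_mul]
    have hj : j - 1 + 1 = j := by omega
    rw [← hj]
    simp only [Nat.add_sub_cancel, faul_coeff_top]
    rw [hj]
    field_simp
    exact_mod_cast hj.symm

/-- power sum -/
noncomputable def FS (n p : ℕ) : ℚ := ∑ s ∈ range n, (s:ℚ)^p

lemma border (m : ℕ) (B : Fin (m+1) → ℕ) :
    (Matrix.vandermonde fun i : Fin (m+1) => (B i : ℚ)).det =
    (m.factorial : ℚ) * (Matrix.of fun i j : Fin m =>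
       FS (B i.succ) (j:ℕ) - FS (B i.castSucc) (j:ℕ)).det := by
  classical
  set N : Matrix (Fin (m+1)) (Fin (m+1)) ℚ :=
    Matrix.of (fun i j => if (j:ℕ) = 0 then 1 else FS (B i) ((j:ℕ)-1)) with hN
  set d : Fin (m+1) → ℚ := fun j => if (j:ℕ) = 0 then 1 else ((j:ℕ):ℚ) with hd
  have step1 : (Matrix.vandermonde fun i : Fin (m+1) => (B i : ℚ)).det
      = N.det * (m.factorial : ℚ) := by
    rw [Matrix.det_eval_matrixOfPolynomials_eq_det_vandermonde
      (fun i : Fin (m+1) => (B i : ℚ)) (fun j => gpol (j:ℕ))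
      (fun j => gpol_natDegree _) (fun j => gpol_monic _)]
    have hV : Matrix.of (fun i j : Fin (m+1) => (gpol (j:ℕ)).eval ((B i : ℚ)))
        = N * Matrix.diagonal d := by
      ext i j
      rw [Matrix.mul_diagonal]
      rcases Nat.eq_zero_or_pos (j:ℕ) with h | h
      · have hj0 : j = 0 := Fin.ext h
        subst hj0
        simp [gpol, hN, hd]
      · simp only [Matrix.of_apply, gpol, if_neg h.ne', hN, hd, Polynomial.eval_mul,
          Polynomial.eval_C, faul_eval]
        rw [FS]
        ring
    rw [hV, Matrix.det_mul, Matrix.det_diagonal]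
    congr 1
    rw [Fin.prod_univ_succ]
    have : ∀ i : Fin m, d i.succ = ((i:ℕ):ℚ) + 1 := by
      intro i; simp [hd, Fin.val_succ]
    simp only [this, hd]
    norm_num
    rw [Fin.prod_univ_eq_prod_range (fun i => ((i:ℕ):ℚ) + 1)]
    exact_mod_cast prod_range_add_one_eq_factorial m
  set N' : Matrix (Fin (m+1)) (Fin (m+1)) ℚ :=
    Matrix.of (fun i j => Fin.cases (N 0 j) (fun i' => N i'.succ j - N i'.castSucc j) i) with hN'
  have step2 : N.det = N'.det := by
    refine Matrix.det_eq_of_forall_row_eq_smul_add_pred (fun _ => 1) (fun j => ?_) (fun i j => ?_)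
    · simp [hN']
    · simp [hN']
  have step3 : N'.det = (Matrix.of fun i j : Fin m =>
      FS (B i.succ) (j:ℕ) - FS (B i.castSucc) (j:ℕ)).det := by
    rw [Matrix.det_succ_column_zero]
    rw [Finset.sum_eq_single 0]
    · have h00 : N' 0 0 = 1 := by simp [hN', hN]
      rw [h00, Fin.succAbove_zero]
      simp only [Fin.val_zero, pow_zero, one_mul]
      congr 1
    · intro i _ hi
      have : N' i 0 = 0 := by
        rcases Fin.eq_zero_or_eq_succ i with rfl | ⟨i', rfl⟩
        · exact absurd rfl hi
        · simp [hN', hN]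
      rw [this]; ring
    · simp
  rw [step1, step2, step3]; ring

def extF (m : ℕ) (v : Fin m → ℕ) : ℕ → ℕ := fun i => if h : i < m then v ⟨i, h⟩ else 0

def boxS (m : ℕ) (l : ℕ → ℕ) : Finset (Fin m → ℕ) :=
  Fintype.piFinset fun i => Finset.Icc (l ((i:ℕ)+1)) (l (i:ℕ))

lemma mem_boxS {m : ℕ} {l : ℕ → ℕ} {v : Fin m → ℕ} :
    v ∈ boxS m l ↔ ∀ i : Fin m, l ((i:ℕ)+1) ≤ v i ∧ v i ≤ l (i:ℕ) := by
  simp [boxS, Fintype.mem_piFinset, Finset.mem_Icc]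

def cnt : ℕ → (ℕ → ℕ) → ℕ
  | 0, _ => 1
  | (m+1), l => ∑ v ∈ boxS m l, cnt m (extF m v)

lemma extF_antitone {m : ℕ} {l : ℕ → ℕ} {v : Fin m → ℕ} (hv : v ∈ boxS m l)
    (_hl : Antitone l) : Antitone (extF m v) := by
  rw [mem_boxS] at hv
  refine antitone_nat_of_succ_le fun i => ?_
  unfold extF
  by_cases h1 : i + 1 < m
  · have hi : i < m := by omega
    rw [dif_pos h1, dif_pos hi]
    exact le_trans (hv ⟨i+1, h1⟩).2 (hv ⟨i, hi⟩).1
  · rw [dif_neg h1]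
    exact Nat.zero_le _

lemma extF_supp {m : ℕ} (v : Fin m → ℕ) : ∀ i, m ≤ i → extF m v i = 0 := by
  intro i hi; unfold extF; rw [dif_neg (by omega)]

lemma extF_rev {m : ℕ} (v : Fin m → ℕ) (j : Fin m) :
    extF m v (m - 1 - (j:ℕ)) = v j.rev := by
  unfold extF
  rw [dif_pos (by omega)]
  congr 1
  refine Fin.ext ?_
  rw [Fin.val_rev]
  show m - 1 - (j:ℕ) = m - ((j:ℕ)+1)
  omega

lemma val_rev' {m : ℕ} (j : Fin m) : ((j.rev : Fin m) : ℕ) = m - 1 - (j:ℕ) := by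
  rw [Fin.val_rev]; omega

lemma sum_Icc_pow_shift (a b c p : ℕ) (hab : a ≤ b + 1) :
    ∑ t ∈ Finset.Icc a b, ((t:ℚ)+(c:ℚ))^p = FS (b+c+1) p - FS (a+c) p := by
  have h1 : ∑ t ∈ Finset.Icc a b, ((t:ℚ)+(c:ℚ))^p = ∑ s ∈ Finset.Icc (a+c) (b+c), (s:ℚ)^p := by
    rw [← Finset.map_add_right_Icc a b c, Finset.sum_map]
    refine Finset.sum_congr rfl fun t _ => ?_
    simp [addRightEmbedding]
  rw [h1, ← Finset.Ico_add_one_right_eq_Icc, Finset.sum_Ico_eq_sub _ (by omega)]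
  simp only [FS, Nat.succ_eq_add_one]

lemma sum_piFinset_det (m : ℕ) (A : Fin m → Finset ℕ) :
    ∑ w ∈ Fintype.piFinset A,
        (Matrix.vandermonde fun j : Fin m => ((w j : ℚ) + ((j:ℕ):ℚ))).det
      = (Matrix.of fun j p : Fin m => ∑ t ∈ A j, ((t:ℚ) + ((j:ℕ):ℚ))^(p:ℕ)).det := by
  classical
  have h := (Matrix.detRowAlternating :
      (Fin m → ℚ) [⋀^Fin m]→ₗ[ℚ] ℚ).toMultilinearMap.map_sum_finset
    (A := A) (g := fun j (t : ℕ) => fun p : Fin m => ((t:ℚ) + ((j:ℕ):ℚ))^(p:ℕ))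
  have e2 : (fun j => ∑ t ∈ A j, fun p : Fin m => ((t:ℚ) + ((j:ℕ):ℚ))^(p:ℕ))
      = (Matrix.of fun j p : Fin m => ∑ t ∈ A j, ((t:ℚ) + ((j:ℕ):ℚ))^(p:ℕ)) := by
    funext j
    funext p
    simp [Finset.sum_apply]
  calc ∑ w ∈ Fintype.piFinset A,
        (Matrix.vandermonde fun j : Fin m => ((w j : ℚ) + ((j:ℕ):ℚ))).det
      = ∑ w ∈ Fintype.piFinset A, Matrix.detRowAlternating
          (fun j (p : Fin m) => ((w j : ℚ) + ((j:ℕ):ℚ))^(p:ℕ)) := rfl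
    _ = Matrix.detRowAlternating
          (fun j => ∑ t ∈ A j, fun p : Fin m => ((t:ℚ) + ((j:ℕ):ℚ))^(p:ℕ)) := h.symm
    _ = (Matrix.of fun j p : Fin m => ∑ t ∈ A j, ((t:ℚ) + ((j:ℕ):ℚ))^(p:ℕ)).det := by
          rw [e2]
          rfl

lemma key : ∀ (m : ℕ) (l : ℕ → ℕ), Antitone l → (∀ i, m ≤ i → l i = 0) →
    ((Nat.superFactorial (m-1) : ℚ)) * (cnt m l : ℚ)
      = (Matrix.vandermonde fun i : Fin m => ((l (m-1-(i:ℕ)) : ℚ) + ((i:ℕ):ℚ))).det := by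
  intro m
  induction m with
  | zero => intro l _ _; simp [cnt, Matrix.det_fin_zero]
  | succ m IH =>
    intro l hl hsupp
    have hIH : ∀ v ∈ boxS m l, (Nat.superFactorial (m-1) : ℚ) * (cnt m (extF m v) : ℚ)
        = (Matrix.vandermonde fun j : Fin m => ((v j.rev : ℚ) + ((j:ℕ):ℚ))).det := by
      intro v hv
      have hfun : (fun i : Fin m => ((extF m v (m-1-(i:ℕ)) : ℚ) + ((i:ℕ):ℚ)))
          = fun j : Fin m => ((v j.rev : ℚ) + ((j:ℕ):ℚ)) :=
        funext fun j => by rw [extF_rev]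
      rw [IH (extF m v) (extF_antitone hv hl) (extF_supp v), hfun]
    set B : Fin (m+1) → ℕ := fun i => l (m - (i:ℕ)) + (i:ℕ) with hB
    have hcast : (fun i : Fin (m+1) => ((l (m+1-1-(i:ℕ)) : ℚ) + ((i:ℕ):ℚ)))
        = fun i => ((B i : ℚ)) := by
      funext i
      simp only [hB, Nat.add_sub_cancel]
      push_cast
      norm_num
    rw [hcast, border m B]
    have hc : ((cnt (m+1) l : ℕ) : ℚ) = ∑ v ∈ boxS m l, ((cnt m (extF m v) : ℕ) : ℚ) := by
      rw [show cnt (m+1) l = ∑ v ∈ boxS m l, cnt m (extF m v) from rfl]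
      push_cast
      rfl
    have hsf : (((m+1-1).superFactorial : ℕ) : ℚ)
        = (m.factorial : ℚ) * (((m-1).superFactorial : ℕ) : ℚ) := by
      cases m with
      | zero => simp
      | succ n => rw [Nat.add_sub_cancel, Nat.superFactorial_succ]; push_cast; simp
    rw [hc, hsf, mul_assoc, Finset.mul_sum]
    congr 1
    have h1 : ∑ v ∈ boxS m l, ((m-1).superFactorial : ℚ) * (cnt m (extF m v) : ℚ)
        = ∑ v ∈ boxS m l,
          (Matrix.vandermonde fun j : Fin m => ((v j.rev : ℚ) + ((j:ℕ):ℚ))).det :=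
      Finset.sum_congr rfl hIH
    rw [h1]
    set A : Fin m → Finset ℕ := fun j => Finset.Icc (l (m-(j:ℕ))) (l (m-1-(j:ℕ))) with hA
    have h2 : ∑ v ∈ boxS m l,
          (Matrix.vandermonde fun j : Fin m => ((v j.rev : ℚ) + ((j:ℕ):ℚ))).det
        = ∑ w ∈ Fintype.piFinset A,
          (Matrix.vandermonde fun j : Fin m => ((w j : ℚ) + ((j:ℕ):ℚ))).det := by
      refine Finset.sum_nbij' (fun v => v ∘ Fin.rev) (fun w => w ∘ Fin.rev) ?_ ?_ ?_ ?_ ?_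
      · intro v hv
        rw [mem_boxS] at hv
        rw [Fintype.mem_piFinset]
        intro j
        have h3 := hv j.rev
        rw [val_rev'] at h3
        rw [hA, Finset.mem_Icc]
        simp only [Function.comp_apply]
        rw [show m - (j:ℕ) = m - 1 - (j:ℕ) + 1 from by omega]
        exact h3
      · intro w hw
        rw [Fintype.mem_piFinset] at hw
        rw [mem_boxS]
        intro j
        have h3 := hw j.rev
        rw [hA, Finset.mem_Icc, val_rev'] at h3
        simp only [Function.comp_apply]
        rw [show m - (m - 1 - (j:ℕ)) = (j:ℕ) + 1 from by omega,
          show m - 1 - (m - 1 - (j:ℕ)) = (j:ℕ) from by omega] at h3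
        exact ⟨h3.1, h3.2⟩
      · intro v _; funext j; simp [Fin.rev_rev]
      · intro w _; funext j; simp [Fin.rev_rev]
      · intro v _
        rfl
    rw [h2, sum_piFinset_det]
    congr 1
    funext j p
    simp only [Matrix.of_apply, hA]
    have hab : l (m-(j:ℕ)) ≤ l (m-1-(j:ℕ)) + 1 :=
      le_trans (hl (show m-1-(j:ℕ) ≤ m - (j:ℕ) from by omega)) (Nat.le_succ _)
    rw [sum_Icc_pow_shift _ _ _ _ hab]
    have hs : B j.succ = l (m - 1 - (j:ℕ)) + (j:ℕ) + 1 := by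
      show l (m - ((j:ℕ)+1)) + ((j:ℕ)+1) = _
      rw [show m - ((j:ℕ)+1) = m - 1 - (j:ℕ) from by omega]
      omega
    have hcs : B j.castSucc = l (m - (j:ℕ)) + (j:ℕ) := rfl
    rw [hs, hcs]

/-- A semistandard Young tableau with entries in `{1, ..., k}` of the shape
whose `i`-th row (0-indexed) has length `ρ i`. -/
structure SSYT (k : ℕ) (ρ : ℕ → ℕ) where
  entry : ℕ → ℕ → ℕ
  zero_outside : ∀ i j, ρ i ≤ j → entry i j = 0
  one_le : ∀ i j, j < ρ i → 1 ≤ entry i j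
  le_k : ∀ i j, j < ρ i → entry i j ≤ k
  row_weak : ∀ i j₁ j₂, j₁ ≤ j₂ → j₂ < ρ i → entry i j₁ ≤ entry i j₂
  col_strict : ∀ i₁ i₂ j, i₁ < i₂ → j < ρ i₂ → entry i₁ j < entry i₂ j

lemma SSYT.ext' {k : ℕ} {ρ : ℕ → ℕ} {T U : SSYT k ρ} (h : T.entry = U.entry) : T = U := by
  cases T; cases U; simpa using h

lemma nat_eq_of_lt_iff {a b : ℕ} (h : ∀ j, j < a ↔ j < b) : a = b := by
  have h1 := h a; have h2 := h b; omega

section SSYTcount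

variable {r : ℕ} {l : ℕ → ℕ}

/-- number of entries ≤ r in row i -/
def nu (r : ℕ) {k : ℕ} {l : ℕ → ℕ} (T : SSYT k l) (i : ℕ) : ℕ :=
  ((Finset.range (l i)).filter (fun j => T.entry i j ≤ r)).card

lemma entry_lb {k : ℕ} (hl : Antitone l) (T : SSYT k l) :
    ∀ i j, j < l i → i + 1 ≤ T.entry i j := by
  intro i
  induction i with
  | zero => exact fun j hj => T.one_le 0 j hj
  | succ i ih =>
    intro j hj
    have hj' : j < l i := lt_of_lt_of_le hj (hl (Nat.le_succ i))
    have h1 := ih j hj'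
    have h2 := T.col_strict i (i+1) j (Nat.lt_succ_self i) hj
    omega

lemma nu_prefix {k : ℕ} (T : SSYT k l) (i : ℕ) :
    ∀ j, j < nu r T i ↔ (j < l i ∧ T.entry i j ≤ r) := by
  classical
  set S := (Finset.range (l i)).filter (fun j => T.entry i j ≤ r) with hS
  have hcard : nu r T i = S.card := rfl
  have hmem : ∀ j, j ∈ S ↔ (j < l i ∧ T.entry i j ≤ r) := by
    intro j; simp [hS, Finset.mem_filter, Finset.mem_range]
  have hdc : ∀ j1 j2, j1 ≤ j2 → j2 ∈ S → j1 ∈ S := by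
    intro j1 j2 h12 hj2
    rw [hmem] at hj2 ⊢
    exact ⟨lt_of_le_of_lt h12 hj2.1, le_trans (T.row_weak i j1 j2 h12 hj2.1) hj2.2⟩
  intro j
  constructor
  · intro hj
    by_contra hcon
    rw [← hmem] at hcon
    have hsub : S ⊆ Finset.range j := by
      intro t ht
      rw [Finset.mem_range]
      by_contra htj
      exact hcon (hdc j t (by omega) ht)
    have := Finset.card_le_card hsub
    rw [Finset.card_range] at this
    omega
  · intro hj
    rw [← hmem] at hj
    have hsub : Finset.range (j+1) ⊆ S := by
      intro t ht
      rw [Finset.mem_range] at ht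
      exact hdc t j (by omega) hj
    have := Finset.card_le_card hsub
    rw [Finset.card_range] at this
    omega

lemma nu_le {k : ℕ} (T : SSYT k l) (i : ℕ) : nu r T i ≤ l i :=
  le_trans (Finset.card_filter_le _ _) (le_of_eq (Finset.card_range _))

lemma nu_ge (hl : Antitone l) (T : SSYT (r+1) l) (i : ℕ) : l (i+1) ≤ nu r T i := by
  by_contra h
  push_neg at h
  have h2 := (nu_prefix (r := r) T i (nu r T i)).mpr
    ⟨lt_of_lt_of_le h (hl (Nat.le_succ i)),
     by
      have h3 := T.col_strict i (i+1) (nu r T i) (Nat.lt_succ_self i) h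
      have h4 := T.le_k (i+1) (nu r T i) h
      omega⟩
  omega

lemma nu_zero (hl : Antitone l) (hsupp : ∀ i, r + 1 ≤ i → l i = 0)
    (T : SSYT (r+1) l) (i : ℕ) (hi : r ≤ i) : nu r T i = 0 := by
  by_contra h
  have h1 := (nu_prefix (r := r) T i 0).mp (by omega)
  have h2 := entry_lb hl T i 0 h1.1
  omega

end SSYTcount

section UpRes

variable {r : ℕ} {l : ℕ → ℕ}

lemma hext_le {v : Fin r → ℕ} (hv : v ∈ boxS r l) : ∀ i, extF r v i ≤ l i := by
  intro i
  rw [mem_boxS] at hv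
  unfold extF
  by_cases h : i < r
  · rw [dif_pos h]; exact (hv ⟨i, h⟩).2
  · rw [dif_neg h]; exact Nat.zero_le _

lemma hext_ge (hsupp : ∀ i, r + 1 ≤ i → l i = 0) {v : Fin r → ℕ} (hv : v ∈ boxS r l) :
    ∀ i, l (i+1) ≤ extF r v i := by
  intro i
  rw [mem_boxS] at hv
  unfold extF
  by_cases h : i < r
  · rw [dif_pos h]; exact (hv ⟨i, h⟩).1
  · rw [dif_neg h]
    rw [hsupp (i+1) (by omega)]

/-- add a horizontal strip of `r+1`'s to a tableau -/
def upT (hl : Antitone l) (hsupp : ∀ i, r + 1 ≤ i → l i = 0) {v : Fin r → ℕ}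
    (hv : v ∈ boxS r l) (U : SSYT r (extF r v)) : SSYT (r+1) l where
  entry := fun i j => if j < l i then (if j < extF r v i then U.entry i j else r+1) else 0
  zero_outside := by intro i j hj; rw [if_neg (by omega)]
  one_le := by
    intro i j hj
    rw [if_pos hj]
    by_cases h : j < extF r v i
    · rw [if_pos h]; exact U.one_le i j h
    · rw [if_neg h]; omega
  le_k := by
    intro i j hj
    rw [if_pos hj]
    by_cases h : j < extF r v i
    · rw [if_pos h]; exact le_trans (U.le_k i j h) (Nat.le_succ r)
    · rw [if_neg h]
  row_weak := by
    intro i j₁ j₂ h12 hj₂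
    have hj₁ : j₁ < l i := by omega
    rw [if_pos hj₁, if_pos hj₂]
    by_cases h2 : j₂ < extF r v i
    · have h1 : j₁ < extF r v i := by omega
      rw [if_pos h1, if_pos h2]
      exact U.row_weak i j₁ j₂ h12 h2
    · rw [if_neg h2]
      by_cases h1 : j₁ < extF r v i
      · rw [if_pos h1]; exact le_trans (U.le_k i j₁ h1) (Nat.le_succ r)
      · rw [if_neg h1]
  col_strict := by
    intro i₁ i₂ j h12 hj₂
    have hj₁ : j < l i₁ := lt_of_lt_of_le hj₂ (hl (le_of_lt h12))
    rw [if_pos hj₁, if_pos hj₂]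
    have hanti : extF r v i₂ ≤ extF r v i₁ := (extF_antitone hv hl) (le_of_lt h12)
    by_cases h2 : j < extF r v i₂
    · rw [if_pos h2, if_pos (by omega)]
      exact U.col_strict i₁ i₂ j h12 h2
    · rw [if_neg h2]
      by_cases h1 : j < extF r v i₁
      · rw [if_pos h1]
        exact Nat.lt_succ_of_le (U.le_k i₁ j h1)
      · exfalso
        have := hext_ge hsupp hv i₁
        have := hl (show i₁ + 1 ≤ i₂ from h12)
        omega

/-- restrict a tableau to its entries `≤ r` -/
def resT (hl : Antitone l) {v : Fin r → ℕ} (T : SSYT (r+1) l)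
    (hvT : ∀ i, extF r v i = nu r T i) : SSYT r (extF r v) where
  entry := fun i j => if j < extF r v i then T.entry i j else 0
  zero_outside := by intro i j hj; rw [if_neg (by omega)]
  one_le := by
    intro i j hj
    rw [if_pos hj]
    rw [hvT i] at hj
    exact T.one_le i j ((nu_prefix T i j).mp hj).1
  le_k := by
    intro i j hj
    rw [if_pos hj]
    rw [hvT i] at hj
    exact ((nu_prefix T i j).mp hj).2
  row_weak := by
    intro i j₁ j₂ h12 hj₂
    rw [if_pos hj₂, if_pos (by omega)]
    rw [hvT i] at hj₂
    exact T.row_weak i j₁ j₂ h12 ((nu_prefix T i j₂).mp hj₂).1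
  col_strict := by
    intro i₁ i₂ j h12 hj₂
    have h1 : j < extF r v i₁ := by
      rw [hvT i₂] at hj₂
      rw [hvT i₁]
      have ha := nu_ge hl T i₁
      have hb := hl (show i₁ + 1 ≤ i₂ from h12)
      have hc := nu_le (r := r) T i₂
      omega
    rw [if_pos hj₂, if_pos h1]
    rw [hvT i₂] at hj₂
    exact T.col_strict i₁ i₂ j h12 ((nu_prefix T i₂ j).mp hj₂).1

lemma nu_upT (hl : Antitone l) (hsupp : ∀ i, r + 1 ≤ i → l i = 0) {v : Fin r → ℕ}
    (hv : v ∈ boxS r l) (U : SSYT r (extF r v)) :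
    ∀ i, nu r (upT hl hsupp hv U) i = extF r v i := by
  intro i
  refine nat_eq_of_lt_iff fun j => ?_
  rw [nu_prefix]
  constructor
  · rintro ⟨hjl, hle⟩
    by_contra h
    have : (upT hl hsupp hv U).entry i j = r + 1 := by
      show (if j < l i then (if j < extF r v i then U.entry i j else r+1) else 0) = r+1
      rw [if_pos hjl, if_neg h]
    omega
  · intro h
    have hjl : j < l i := lt_of_lt_of_le h (hext_le hv i)
    refine ⟨hjl, ?_⟩
    have : (upT hl hsupp hv U).entry i j = U.entry i j := by
      show (if j < l i then (if j < extF r v i then U.entry i j else r+1) else 0) = _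
      rw [if_pos hjl, if_pos h]
    rw [this]
    exact U.le_k i j h

end UpRes

lemma ssyt_count : ∀ (r : ℕ) (l : ℕ → ℕ), Antitone l → (∀ i, r ≤ i → l i = 0) →
    Finite (SSYT r l) ∧ Nat.card (SSYT r l) = cnt r l := by
  intro r
  induction r with
  | zero =>
    intro l _ hsupp
    have h0 : ∀ i, l i = 0 := fun i => hsupp i (Nat.zero_le i)
    haveI : Unique (SSYT 0 l) :=
      { default := ⟨fun _ _ => 0, fun _ _ _ => rfl,
          fun i j hj => absurd hj (by simp [h0 i]),
          fun i j hj => absurd hj (by simp [h0 i]),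
          fun i j₁ j₂ _ hj => absurd hj (by simp [h0 i]),
          fun i₁ i₂ j _ hj => absurd hj (by simp [h0 i₂])⟩
        uniq := fun T => SSYT.ext' (funext fun i => funext fun j =>
          T.zero_outside i j (le_of_eq_of_le (h0 i) (Nat.zero_le j))) }
    exact ⟨inferInstance, by rw [Nat.card_unique]; rfl⟩
  | succ r IH =>
    intro l hl hsupp
    classical
    have hmem : ∀ T : SSYT (r+1) l, (fun i : Fin r => nu r T (i:ℕ)) ∈ boxS r l := by
      intro T
      rw [mem_boxS]
      exact fun i => ⟨nu_ge hl T (i:ℕ), nu_le T (i:ℕ)⟩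
    set d : SSYT (r+1) l → ↥(boxS r l) :=
      fun T => ⟨fun i : Fin r => nu r T (i:ℕ), hmem T⟩ with hd
    have hshape : ∀ (b : ↥(boxS r l)) (T : SSYT (r+1) l), d T = b →
        ∀ i, extF r b.1 i = nu r T i := by
      intro b T hT i
      have h1 : (fun i : Fin r => nu r T (i:ℕ)) = b.1 := congrArg Subtype.val hT
      unfold extF
      by_cases h : i < r
      · rw [dif_pos h, ← h1]
      · rw [dif_neg h]
        exact (nu_zero hl hsupp T i (by omega)).symm
    -- the fiber equivalences
    have fe : ∀ b : ↥(boxS r l), {T : SSYT (r+1) l // d T = b} ≃ SSYT r (extF r b.1) := by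
      intro b
      refine ⟨fun p => resT hl p.1 (hshape b p.1 p.2),
              fun U => ⟨upT hl hsupp b.2 U, ?_⟩, ?_, ?_⟩
      · apply Subtype.ext
        show (fun i : Fin r => nu r (upT hl hsupp b.2 U) (i:ℕ)) = b.1
        funext i
        rw [nu_upT hl hsupp b.2 U (i:ℕ)]
        show (if h : (i:ℕ) < r then b.1 ⟨(i:ℕ), h⟩ else 0) = b.1 i
        rw [dif_pos i.isLt]
      · rintro ⟨T, hT⟩
        apply Subtype.ext
        apply SSYT.ext'
        funext i j
        show (if j < l i then
            (if j < extF r b.1 i then (resT hl T (hshape b T hT)).entry i j else r+1)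
          else 0) = T.entry i j
        by_cases hjl : j < l i
        · rw [if_pos hjl]
          by_cases h : j < extF r b.1 i
          · rw [if_pos h]
            show (if j < extF r b.1 i then T.entry i j else 0) = T.entry i j
            rw [if_pos h]
          · rw [if_neg h]
            have hnu : ¬ j < nu r T i := by rw [← hshape b T hT i]; exact h
            have h2 := T.le_k i j hjl
            have h3 : ¬ (j < l i ∧ T.entry i j ≤ r) := fun hc => hnu ((nu_prefix T i j).mpr hc)
            omega
        · rw [if_neg hjl]
          exact (T.zero_outside i j (by omega)).symm
      · intro U
        apply SSYT.ext'
        funext i j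
        show (if j < extF r b.1 i then (upT hl hsupp b.2 U).entry i j else 0) = U.entry i j
        by_cases h : j < extF r b.1 i
        · rw [if_pos h]
          have hjl : j < l i := lt_of_lt_of_le h (hext_le b.2 i)
          show (if j < l i then (if j < extF r b.1 i then U.entry i j else r+1) else 0)
              = U.entry i j
          rw [if_pos hjl, if_pos h]
        · rw [if_neg h]
          exact (U.zero_outside i j (by omega)).symm
    -- finiteness
    haveI hfin : ∀ b : ↥(boxS r l), Finite (SSYT r (extF r b.1)) := fun b =>
      (IH (extF r b.1) (extF_antitone b.2 hl) (extF_supp b.1)).1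
    haveI hfib : ∀ b : ↥(boxS r l), Finite {T : SSYT (r+1) l // d T = b} := fun b =>
      Finite.of_equiv _ (fe b).symm
    haveI hfinT : Finite (SSYT (r+1) l) :=
      Finite.of_equiv _ (Equiv.sigmaFiberEquiv d)
    refine ⟨hfinT, ?_⟩
    haveI : ∀ b : ↥(boxS r l), Fintype {T : SSYT (r+1) l // d T = b} := fun b =>
      Fintype.ofFinite _
    calc Nat.card (SSYT (r+1) l)
        = Nat.card (Σ b : ↥(boxS r l), {T : SSYT (r+1) l // d T = b}) :=
          Nat.card_congr (Equiv.sigmaFiberEquiv d).symm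
      _ = ∑ b : ↥(boxS r l), Nat.card {T : SSYT (r+1) l // d T = b} := by
          rw [Nat.card_eq_fintype_card, Fintype.card_sigma]
          exact Finset.sum_congr rfl fun b _ => (Nat.card_eq_fintype_card).symm
      _ = ∑ b : ↥(boxS r l), cnt r (extF r b.1) := by
          refine Finset.sum_congr rfl fun b _ => ?_
          rw [Nat.card_congr (fe b)]
          exact (IH (extF r b.1) (extF_antitone b.2 hl) (extF_supp b.1)).2
      _ = ∑ v ∈ boxS r l, cnt r (extF r v) := Finset.sum_coe_sort (boxS r l) (fun v => cnt r (extF r v))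
      _ = cnt (r+1) l := rfl

lemma sf_ne_zero (n : ℕ) : (Nat.superFactorial n : ℚ) ≠ 0 := by
  have : 0 < Nat.superFactorial n := by
    induction n with
    | zero => norm_num [Nat.superFactorial]
    | succ n ih => rw [Nat.superFactorial_succ]; positivity
  positivity

/-- The number of semistandard Young tableaux of staircase shape
`(k-1, k-2, ..., 1, 0)` with entries in `{1, ..., k}` equals `2^(k(k-1)/2)`. -/
theorem card_ssyt_staircase' (k : ℕ) (hk : 0 < k) :
    Nat.card (SSYT k (fun i => k - 1 - i)) = 2 ^ (k * (k - 1) / 2) := by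
  obtain ⟨n, rfl⟩ : ∃ n, k = n + 1 := ⟨k-1, by omega⟩
  set l : ℕ → ℕ := fun i => n + 1 - 1 - i with hldef
  have hanti : Antitone l := fun i j hij => by simp only [hldef]; omega
  have hsupp : ∀ i, n + 1 ≤ i → l i = 0 := fun i hi => by simp only [hldef]; omega
  have hcard := (ssyt_count (n+1) l hanti hsupp).2
  have hkey := key (n+1) l hanti hsupp
  have hL : (fun i : Fin (n+1) => ((l (n+1-1-(i:ℕ)) : ℚ) + ((i:ℕ):ℚ)))
      = fun i : Fin (n+1) => (((i:ℕ):ℚ) + ((i:ℕ):ℚ)) := by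
    funext i
    have : l (n+1-1-(i:ℕ)) = (i:ℕ) := by
      simp only [hldef]
      have := i.isLt
      omega
    rw [this]
  rw [hL] at hkey
  -- compute the doubled vandermonde determinant
  have hdet : (Matrix.vandermonde fun i : Fin (n+1) => (((i:ℕ):ℚ) + ((i:ℕ):ℚ))).det
      = 2 ^ ((n+1) * n / 2) * (Nat.superFactorial n : ℚ) := by
    rw [Matrix.det_vandermonde]
    have h1 : ∀ i : Fin (n+1), ∏ j ∈ Finset.Ioi i,
        ((((j:ℕ):ℚ) + (j:ℕ)) - (((i:ℕ):ℚ) + (i:ℕ)))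
        = 2 ^ (Finset.Ioi i).card * ∏ j ∈ Finset.Ioi i, (((j:ℕ):ℚ) - ((i:ℕ):ℚ)) := by
      intro i
      rw [← Finset.prod_const, ← Finset.prod_mul_distrib]
      exact Finset.prod_congr rfl fun j _ => by ring
    rw [Finset.prod_congr rfl fun i _ => h1 i, Finset.prod_mul_distrib, Finset.prod_pow_eq_pow_sum]
    have h2 : ∑ i : Fin (n+1), (Finset.Ioi i).card = (n+1) * n / 2 := by
      have h3 : ∀ i : Fin (n+1), (Finset.Ioi i).card = n - (i:ℕ) := by
        intro i; rw [Fin.card_Ioi]; omega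
      simp only [h3]
      rw [Fin.sum_univ_eq_sum_range (fun i => n - i) (n+1)]
      have h4 : ∑ i ∈ Finset.range (n+1), (n - i) = ∑ i ∈ Finset.range (n+1), i := by
        rw [← Finset.sum_range_reflect]
        exact Finset.sum_congr rfl fun i hi => by
          rw [Finset.mem_range] at hi; omega
      rw [h4]
      have h5 := Finset.sum_range_id_mul_two (n+1)
      simp only [Nat.add_sub_cancel] at h5
      rw [← h5, Nat.mul_div_cancel _ (by norm_num)]
    rw [h2]
    congr 1
    have h6 := Matrix.det_vandermonde_id_eq_superFactorial (R := ℚ) n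
    rw [Matrix.det_vandermonde] at h6
    exact h6
  rw [hdet] at hkey
  rw [Nat.add_sub_cancel] at hkey
  have hcnt : (cnt (n+1) l : ℚ) = 2 ^ ((n+1) * n / 2) := by
    refine mul_right_cancel₀ (sf_ne_zero n) ?_
    linear_combination hkey
  have : cnt (n+1) l = 2 ^ ((n+1) * n / 2) := by
    have := hcnt
    rw [show ((2:ℚ) ^ ((n+1) * n / 2)) = (((2 ^ ((n+1) * n / 2) : ℕ)):ℚ) by push_cast; ring] at this
    exact_mod_cast this
  rw [hcard]
  rw [show (n + 1) * (n + 1 - 1) / 2 = (n+1) * n / 2 by norm_num]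
  exact this
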